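/- arXiv:1705.01189 — 3 statements merged into one kernel-verified Lean document; each statement's English description precedes it below -/
import Mathlib

section
/- Consider the planar linear system ẋ = Λx with Λ = [[σ, ω], [−ω, σ]] where σ < 0 and ω ≠ 0. Let the template rows be a_k = (cos ψ_k, sin ψ_k) for ψ_k = 2kπ/m, k = 1,…,m. If tan(π/m) < |σ/ω|, then the polytope P = {x : a_k·x ≤ 1 for all k} is invariant for the flow: at any boundary point x with a_k·x = 1 and a_j·x ≤ 1 for all j, the vector field points inward, i.e., a_k·(Λx) < 0. -/
open Real in
theorem polygon_template_invariant (σ ω : ℝ) (hσ : σ < 0) (hω : ω ≠ 0)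
    (m : ℕ) (hm : 3 ≤ m) (htan : tan (π / m) < |σ / ω|) :
    ∀ k : ℕ, 1 ≤ k → k ≤ m →
      ∀ x₁ x₂ : ℝ,
        cos (2 * k * π / m) * x₁ + sin (2 * k * π / m) * x₂ = 1 →
        (∀ j : ℕ, 1 ≤ j → j ≤ m →
          cos (2 * j * π / m) * x₁ + sin (2 * j * π / m) * x₂ ≤ 1) →
        cos (2 * k * π / m) * (σ * x₁ + ω * x₂) +
          sin (2 * k * π / m) * (-ω * x₁ + σ * x₂) < 0 := by
  intro k hk1 hkm x₁ x₂ hx hall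
  have hm0 : (0:ℝ) < m := by
    have h3 : (3:ℝ) ≤ m := by exact_mod_cast hm
    linarith
  have hmne : (m:ℝ) ≠ 0 := ne_of_gt hm0
  set ν : ℝ := π / m with hνdef
  have hν0 : 0 < ν := by positivity
  have hνlt : ν < π / 2 := by
    have h3 : (3:ℝ) ≤ m := by exact_mod_cast hm
    rw [hνdef, div_lt_div_iff₀ hm0 (by norm_num)]
    nlinarith [pi_pos]
  have hcos : 0 < cos ν := cos_pos_of_mem_Ioo ⟨by linarith, hνlt⟩
  have hsin : 0 < sin ν := sin_pos_of_pos_of_lt_pi hν0 (by linarith [pi_pos])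
  set ψ : ℝ := 2 * (k:ℝ) * π / m with hψdef
  set t : ℝ := cos ψ * x₂ - sin ψ * x₁ with htdef
  -- upper-neighbor inequality
  have h1 : cos (ψ + 2*ν) * x₁ + sin (ψ + 2*ν) * x₂ ≤ 1 := by
    rcases lt_or_eq_of_le hkm with h | h
    · have hh := hall (k+1) (by omega) (by omega)
      have e : (2 * ((k:ℝ)+1) * π / m) = ψ + 2*ν := by
        rw [hψdef, hνdef]; field_simp
      push_cast at hh
      rwa [e] at hh
    · have hh := hall 1 (by omega) (by omega)
      have e1 : (2 * ((1:ℕ):ℝ) * π / m) = 2*ν := by rw [hνdef]; push_cast; ring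
      have e2 : ψ + 2*ν = 2*ν + 2*π := by
        rw [hψdef, hνdef, ← h]; field_simp; ring
      rw [e1] at hh
      rwa [e2, cos_add_two_pi, sin_add_two_pi]
  -- lower-neighbor inequality
  have h2 : cos (ψ - 2*ν) * x₁ + sin (ψ - 2*ν) * x₂ ≤ 1 := by
    rcases Nat.lt_or_ge 1 k with h | h
    · have hh := hall (k-1) (by omega) (by omega)
      have hc : ((k-1:ℕ):ℝ) = (k:ℝ) - 1 := by
        have : 1 ≤ k := by omega
        push_cast [Nat.cast_sub this]; ring
      rw [hc] at hh
      have e : (2 * ((k:ℝ)-1) * π / m) = ψ - 2*ν := by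
        rw [hψdef, hνdef]; field_simp
      rwa [e] at hh
    · have hk : k = 1 := by omega
      have hh := hall m (by omega) (le_refl m)
      have e1 : (2 * ((m:ℕ):ℝ) * π / m) = 0 + 2*π := by field_simp; ring
      have e2 : ψ - 2*ν = 0 := by
        rw [hψdef, hνdef, hk]; push_cast; field_simp; ring
      rw [e1, cos_add_two_pi, sin_add_two_pi] at hh
      rwa [e2]
  -- expand the neighbor inequalities
  have e1 : cos (ψ + 2*ν) * x₁ + sin (ψ + 2*ν) * x₂ = cos (2*ν) + sin (2*ν) * t := by
    rw [cos_add, sin_add, htdef]; linear_combination cos (2*ν) * hx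
  have e2 : cos (ψ - 2*ν) * x₁ + sin (ψ - 2*ν) * x₂ = cos (2*ν) - sin (2*ν) * t := by
    rw [cos_sub, sin_sub, htdef]; linear_combination cos (2*ν) * hx
  rw [e1] at h1
  rw [e2] at h2
  have s2 : sin (2*ν) = 2 * sin ν * cos ν := sin_two_mul ν
  have c2 : cos (2*ν) = 2 * cos ν ^ 2 - 1 := cos_two_mul ν
  have pyth := sin_sq_add_cos_sq ν
  -- |t| ≤ tan ν
  have htub : t ≤ tan ν := by
    rw [tan_eq_sin_div_cos, le_div_iff₀ hcos]
    have key : (2*sin ν) * (t * cos ν) ≤ (2*sin ν) * sin ν := by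
      rw [s2, c2] at h1; nlinarith [h1, pyth]
    exact le_of_mul_le_mul_left key (by positivity)
  have htlb : -tan ν ≤ t := by
    rw [tan_eq_sin_div_cos, neg_le, le_div_iff₀ hcos]
    have key : (2*sin ν) * (-t * cos ν) ≤ (2*sin ν) * sin ν := by
      rw [s2, c2] at h2; nlinarith [h2, pyth]
    exact le_of_mul_le_mul_left key (by positivity)
  -- combine with the tan hypothesis
  have hωpos : 0 < |ω| := abs_pos.mpr hω
  have htan' : tan ν * |ω| < -σ := by
    rw [abs_div, abs_of_neg hσ, lt_div_iff₀ hωpos] at htan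
    exact htan
  have hωt : ω * t < -σ := by
    have hb : ω * t ≤ |ω| * tan ν := by
      calc ω * t ≤ |ω * t| := le_abs_self _
        _ = |ω| * |t| := abs_mul ω t
        _ ≤ |ω| * tan ν := mul_le_mul_of_nonneg_left (abs_le.mpr ⟨htlb, htub⟩) (abs_nonneg ω)
    linarith
  have eg : cos ψ * (σ * x₁ + ω * x₂) + sin ψ * (-ω * x₁ + σ * x₂) = σ + ω * t := by
    rw [htdef]; linear_combination σ * hx
  linarith [eg, hωt]
end

section
/- Let f : ℝⁿ → ℝⁿ be continuously differentiable and P = {x : A x ≤ b} a compact polytope containing a point x_eq with f(x_eq) = 0 in its interior. If for every i and every x on the face {x ∈ P : A_i x = b_i} we have A_i·f(x) < 0, then P is forward invariant for ẋ = f(x): any solution starting in P remains in P for all t ≥ 0. -/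
open Set Filter Topology

open Matrix in
theorem polytope_forward_invariant (n m : ℕ)
    (A : Fin m → (Fin n → ℝ)) (b : Fin m → ℝ)
    (f : (Fin n → ℝ) → (Fin n → ℝ)) (hf : ContDiff ℝ 1 f)
    (hcomp : IsCompact {x : Fin n → ℝ | ∀ i, A i ⬝ᵥ x ≤ b i})
    (xeq : Fin n → ℝ) (heq : f xeq = 0)
    (hint : xeq ∈ interior {x : Fin n → ℝ | ∀ i, A i ⬝ᵥ x ≤ b i})
    (hin : ∀ i, ∀ x ∈ {x : Fin n → ℝ | ∀ i, A i ⬝ᵥ x ≤ b i},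
      A i ⬝ᵥ x = b i → A i ⬝ᵥ f x < 0) :
    ∀ x : ℝ → (Fin n → ℝ), (∀ t, HasDerivAt x (f (x t)) t) →
      (∀ i, A i ⬝ᵥ x 0 ≤ b i) → ∀ t ≥ 0, ∀ i, A i ⬝ᵥ x t ≤ b i := by
  set P : Set (Fin n → ℝ) := {x : Fin n → ℝ | ∀ i, A i ⬝ᵥ x ≤ b i} with hPdef
  intro x hx hx0 t ht
  -- derivative of each constraint function
  have hderiv : ∀ (i : Fin m) (s : ℝ),
      HasDerivAt (fun s => A i ⬝ᵥ x s) (A i ⬝ᵥ f (x s)) s := by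
    intro i s
    have hcomp' : ∀ j, HasDerivAt (fun s => x s j) (f (x s) j) s := by
      intro j; exact hasDerivAt_pi.mp (hx s) j
    have : HasDerivAt (fun s => ∑ j, A i j * x s j) (∑ j, A i j * f (x s) j) s := by
      apply HasDerivAt.fun_sum
      intro j _
      exact (hcomp' j).const_mul (A i j)
    simpa [dotProduct] using this
  have hxcont : Continuous x := by
    apply continuous_iff_continuousAt.mpr
    intro s; exact (hx s).continuousAt
  have hPclosed : IsClosed P := by
    have : P = ⋂ i, {y : Fin n → ℝ | A i ⬝ᵥ y ≤ b i} := by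
      ext y; simp [hPdef, Set.mem_iInter]
    rw [this]
    refine isClosed_iInter fun i => ?_
    have hc : Continuous fun y : Fin n → ℝ => A i ⬝ᵥ y := by
      have : (fun y : Fin n → ℝ => A i ⬝ᵥ y) = fun y => ∑ j, A i j * y j := by
        ext y; simp [dotProduct]
      rw [this]
      exact continuous_finset_sum _ fun j _ => (continuous_const.mul (continuous_apply j))
    exact isClosed_le hc continuous_const
  -- Suffices to show x t ∈ P
  suffices hmem : x t ∈ P by exact hmem
  by_contra hxt
  -- first exit time
  set E : Set ℝ := {s | s ∈ Icc 0 t ∧ x s ∉ P} with hEdef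
  have hEne : E.Nonempty := ⟨t, ⟨ht, le_refl t⟩, hxt⟩
  have hEbdd : BddBelow E := ⟨0, fun s hs => hs.1.1⟩
  set t0 : ℝ := sInf E with ht0def
  have ht0_ge : 0 ≤ t0 := le_csInf hEne fun s hs => hs.1.1
  have ht0_le : t0 ≤ t := csInf_le hEbdd ⟨⟨ht, le_refl t⟩, hxt⟩
  have hbelow : ∀ s, 0 ≤ s → s < t0 → x s ∈ P := by
    intro s hs0 hst0
    by_contra hxs
    exact absurd (csInf_le hEbdd ⟨⟨hs0, hst0.le.trans ht0_le⟩, hxs⟩) (not_le.mpr hst0)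
  have ht0P : x t0 ∈ P := by
    rcases eq_or_lt_of_le ht0_ge with h0 | h0
    · rw [← h0]; exact hx0
    · have htend : Tendsto x (𝓝[<] t0) (𝓝 (x t0)) :=
        (hxcont.tendsto t0).mono_left nhdsWithin_le_nhds
      have hev : ∀ᶠ s in 𝓝[<] t0, x s ∈ P := by
        have hIoo : Ioo 0 t0 ∈ 𝓝[<] t0 := Ioo_mem_nhdsLT_of_mem ⟨h0, le_refl t0⟩
        filter_upwards [hIoo] with s hs
        exact hbelow s hs.1.le hs.2
      exact hPclosed.mem_of_tendsto htend hev
  have ht0E : t0 ∉ E := fun h => h.2 ht0P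
  -- frequently exit points just after t0
  have hfreq : ∃ᶠ s in 𝓝[>] t0, s ∈ E := by
    by_contra hcon
    rw [not_frequently] at hcon
    rcases mem_nhdsGT_iff_exists_Ioo_subset.mp hcon with ⟨u, hu, hsub⟩
    have hlb : t0 < u := hu
    have hub : ∀ s ∈ E, u ≤ s := by
      intro s hs
      have hs_ge : t0 ≤ s := csInf_le hEbdd hs
      have hs_ne : s ≠ t0 := fun h => ht0E (h ▸ hs)
      have hs_gt : t0 < s := lt_of_le_of_ne hs_ge (Ne.symm hs_ne)
      by_contra hsu
      push_neg at hsu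
      exact (hsub ⟨hs_gt, hsu⟩) hs
    have : u ≤ t0 := le_csInf hEne hub
    exact absurd this (not_le.mpr hlb)
  -- all constraints hold just after t0
  have hevent : ∀ᶠ s in 𝓝[>] t0, x s ∈ P := by
    have : ∀ i : Fin m, ∀ᶠ s in 𝓝[>] t0, A i ⬝ᵥ x s ≤ b i := by
      intro i
      rcases lt_or_eq_of_le (ht0P i) with hlt | heqi
      · -- inactive constraint: by continuity
        have hc : ContinuousAt (fun s => A i ⬝ᵥ x s) t0 := (hderiv i t0).continuousAt
        have := hc.tendsto.eventually_lt_const hlt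
        exact ((this.filter_mono nhdsWithin_le_nhds).mono fun s hs => hs.le)
      · -- active constraint: derivative is negative
        have hd : A i ⬝ᵥ f (x t0) < 0 := hin i (x t0) ht0P heqi
        have hslope := hasDerivAt_iff_tendsto_slope.mp (hderiv i t0)
        have hev : ∀ᶠ s in 𝓝[≠] t0, slope (fun s => A i ⬝ᵥ x s) t0 s < 0 :=
          hslope.eventually_lt_const hd
        have hmono : 𝓝[>] t0 ≤ 𝓝[≠] t0 :=
          nhdsWithin_mono t0 fun s hs => ne_of_gt hs
        filter_upwards [hev.filter_mono hmono, self_mem_nhdsWithin] with s hs hs'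
        have hspos : (0:ℝ) < s - t0 := sub_pos.mpr hs'
        rw [slope_def_field] at hs
        have : (A i ⬝ᵥ x s - A i ⬝ᵥ x t0) / (s - t0) < 0 := hs
        have hnum : A i ⬝ᵥ x s - A i ⬝ᵥ x t0 < 0 := by
          by_contra hnn
          push_neg at hnn
          exact absurd (div_nonneg hnn hspos.le) (not_le.mpr this)
        linarith [heqi]
    exact Filter.eventually_all.mpr this
  rcases (hfreq.and_eventually hevent).exists with ⟨s, hsE, hsP⟩
  exact hsE.2 hsP
end

section
/- Let Λ = [[σ, ω], [−ω, σ]] with σ < 0, ω > 0, and tan(π/m) < −σ/ω for an integer m ≥ 3. Then for every unit vector a = (cos ψ, sin ψ) and every x ∈ ℝ² on the boundary piece where a·x = r and ‖x‖ ≤ r/cos(π/m) for some r > 0, we have a·(Λx) ≤ r·(σ + ω·tan(π/m)) < 0. -/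
private lemma le_of_sq_le_sq_aux (a b : ℝ) (hb : 0 ≤ b) (h : a ^ 2 ≤ b ^ 2) :
    a ≤ b := by nlinarith

open Real in
theorem key_invariance_inequality (σ ω : ℝ) (m : ℕ) (hσ : σ < 0) (hω : 0 < ω)
    (hm : 3 ≤ m) (htan : tan (π / m) < -σ / ω) :
    ∀ ψ r x₁ x₂ : ℝ, 0 < r →
      cos ψ * x₁ + sin ψ * x₂ = r →
      Real.sqrt (x₁ ^ 2 + x₂ ^ 2) ≤ r / cos (π / m) →
      cos ψ * (σ * x₁ + ω * x₂) + sin ψ * (-ω * x₁ + σ * x₂)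
          ≤ r * (σ + ω * tan (π / m)) ∧
        r * (σ + ω * tan (π / m)) < 0 := by
  intro ψ r x₁ x₂ hr hplane hnorm
  have hm' : (3 : ℝ) ≤ m := by exact_mod_cast hm
  have hθ0 : 0 < π / m := by positivity
  have hθle : π / m ≤ π / 3 :=
    div_le_div_of_nonneg_left pi_pos.le (by norm_num) hm'
  have hθlt : π / m < π / 2 := lt_of_le_of_lt hθle (by linarith [pi_pos])
  have hc : 0 < Real.cos (π / m) := Real.cos_pos_of_mem_Ioo ⟨by linarith, hθlt⟩
  have hs : 0 ≤ Real.sin (π / m) :=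
    Real.sin_nonneg_of_nonneg_of_le_pi hθ0.le (by linarith [pi_pos])
  have ht : 0 ≤ Real.tan (π / m) := by
    rw [Real.tan_eq_sin_div_cos]; positivity
  have hpyth : Real.sin (π / m) ^ 2 + Real.cos (π / m) ^ 2 = 1 :=
    Real.sin_sq_add_cos_sq _
  have hpyth2 : Real.sin ψ ^ 2 + Real.cos ψ ^ 2 = 1 := Real.sin_sq_add_cos_sq _
  have htω : Real.tan (π / m) * ω < -σ := (lt_div_iff₀ hω).mp htan
  have hneg : r * (σ + ω * Real.tan (π / m)) < 0 :=
    mul_neg_of_pos_of_neg hr (by nlinarith)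
  refine ⟨?_, hneg⟩
  have hS0 : (0 : ℝ) ≤ x₁ ^ 2 + x₂ ^ 2 := by positivity
  have hS : x₁ ^ 2 + x₂ ^ 2 ≤ (r / Real.cos (π / m)) ^ 2 := by
    have h1 := Real.sq_sqrt hS0
    nlinarith [Real.sqrt_nonneg (x₁ ^ 2 + x₂ ^ 2)]
  have hcross2 : (Real.cos ψ * x₂ - Real.sin ψ * x₁) ^ 2
      = x₁ ^ 2 + x₂ ^ 2 - r ^ 2 := by
    have h2 : r ^ 2 + (Real.cos ψ * x₂ - Real.sin ψ * x₁) ^ 2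
        = (x₁ ^ 2 + x₂ ^ 2) * (Real.sin ψ ^ 2 + Real.cos ψ ^ 2) := by
      rw [← hplane]; ring
    rw [hpyth2] at h2; linarith
  have hkey : (r * Real.tan (π / m)) ^ 2 = (r / Real.cos (π / m)) ^ 2 - r ^ 2 := by
    rw [Real.tan_eq_sin_div_cos]
    field_simp
    linear_combination hpyth
  have hrt : 0 ≤ r * Real.tan (π / m) := by positivity
  have hcrossle : Real.cos ψ * x₂ - Real.sin ψ * x₁ ≤ r * Real.tan (π / m) :=
    le_of_sq_le_sq_aux _ _ hrt (by rw [hkey]; linarith)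
  have hmul : ω * (Real.cos ψ * x₂ - Real.sin ψ * x₁) ≤ ω * (r * Real.tan (π / m)) :=
    mul_le_mul_of_nonneg_left hcrossle hω.le
  calc Real.cos ψ * (σ * x₁ + ω * x₂) + Real.sin ψ * (-ω * x₁ + σ * x₂)
      = σ * (Real.cos ψ * x₁ + Real.sin ψ * x₂)
        + ω * (Real.cos ψ * x₂ - Real.sin ψ * x₁) := by ring
    _ = σ * r + ω * (Real.cos ψ * x₂ - Real.sin ψ * x₁) := by rw [hplane]
    _ ≤ σ * r + ω * (r * Real.tan (π / m)) := by linarith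
    _ = r * (σ + ω * Real.tan (π / m)) := by ring
end
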